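/- Suppose v̂ ∈ ℝᵐ is a centered point for parameter μ > 0, i.e., for some x̂ ∈ ℝⁿ: √μ·Aᵀe^{v̂} = Wx̂ + c and √μ·e^{−v̂} = Ax̂ + b. Let d = d(v,μ) be the Newton direction at v ∈ ℝᵐ and define f(t) := h(v̂, v + t·d). Then f′(0) ≤ −(f(0) + ‖d‖²). -/

import Mathlib

open Matrix

/-- Elementwise exponentiation `e^v` of a vector. -/
noncomputable def expV {m : ℕ} (v : Fin m → ℝ) : Fin m → ℝ := fun i => Real.exp (v i)

/-- The log-domain Newton system: `(d, x)` satisfies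
`√μ·Aᵀ(eᵛ + eᵛ∘d) = Wx + c` and `√μ·(e^{−v} − e^{−v}∘d) = Ax + b`. -/
noncomputable def IsNewton {m n : ℕ} (A : Matrix (Fin m) (Fin n) ℝ) (b : Fin m → ℝ)
    (c : Fin n → ℝ) (W : Matrix (Fin n) (Fin n) ℝ) (μ : ℝ) (v d : Fin m → ℝ)
    (x : Fin n → ℝ) : Prop :=
  Real.sqrt μ • (Aᵀ).mulVec (expV v + expV v * d) = W.mulVec x + c ∧
  Real.sqrt μ • (expV (-v) - expV (-v) * d) = A.mulVec x + b

/-- `v` is a centered point for parameter `μ`, witnessed by `x`: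
`√μ·Aᵀeᵛ = Wx + c` and `√μ·e^{−v} = Ax + b`. -/
noncomputable def IsCentered {m n : ℕ} (A : Matrix (Fin m) (Fin n) ℝ) (b : Fin m → ℝ)
    (c : Fin n → ℝ) (W : Matrix (Fin n) (Fin n) ℝ) (μ : ℝ) (v : Fin m → ℝ)
    (x : Fin n → ℝ) : Prop :=
  Real.sqrt μ • (Aᵀ).mulVec (expV v) = W.mulVec x + c ∧
  Real.sqrt μ • expV (-v) = A.mulVec x + b

/-- The divergence `h(u,v) := ⟨eᵘ, e^{−v}⟩ + ⟨e^{−u}, eᵛ⟩ − 2m`. -/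
noncomputable def diverg {m : ℕ} (u v : Fin m → ℝ) : ℝ :=
  (∑ i, Real.exp (u i) * Real.exp (-v i)) + (∑ i, Real.exp (-u i) * Real.exp (v i))
    - 2 * m

/-- The Euclidean norm of a vector in `ℝᵐ`. -/
noncomputable def enorm {m : ℕ} (d : Fin m → ℝ) : ℝ := Real.sqrt (∑ i, d i ^ 2)

/-- if `v̂` is a centered point for `μ > 0` and `d = d(v,μ)` is the Newton
direction at `v`, then `f(t) := h(v̂, v + t·d)` satisfies `f′(0) ≤ −(f(0) + ‖d‖²)`. -/
theorem stmt_4 {m n : ℕ} (A : Matrix (Fin m) (Fin n) ℝ) (b : Fin m → ℝ) (c : Fin n → ℝ)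
    (W : Matrix (Fin n) (Fin n) ℝ) (hW : W.PosSemidef) (hAW : (Aᵀ * A + W).PosDef)
    (μ : ℝ) (hμ : 0 < μ) (vhat : Fin m → ℝ) (xhat : Fin n → ℝ)
    (hcent : IsCentered A b c W μ vhat xhat)
    (v d : Fin m → ℝ) (x : Fin n → ℝ) (hd : IsNewton A b c W μ v d x) :
    deriv (fun t : ℝ => diverg vhat (v + t • d)) 0
      ≤ -(diverg vhat v + ∑ i, d i ^ 2) := by
  obtain ⟨hc1, hc2⟩ := hcent
  obtain ⟨hd1, hd2⟩ := hd
  set p : Fin m → ℝ := expV v + expV v * d - expV vhat with hp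
  set q : Fin m → ℝ := expV (-v) - expV (-v) * d - expV (-vhat) with hq
  set y : Fin n → ℝ := x - xhat with hy
  -- the two residual equations
  have e1 : Real.sqrt μ • (Aᵀ).mulVec p = W.mulVec y := by
    rw [hp, Matrix.mulVec_sub, smul_sub, hd1, hc1, hy, Matrix.mulVec_sub]
    abel
  have e2 : Real.sqrt μ • q = A.mulVec y := by
    rw [hq, hy, Matrix.mulVec_sub, show expV (-v) - expV (-v) * d - expV (-vhat)
        = (expV (-v) - expV (-v) * d) - expV (-vhat) from rfl, smul_sub, hd2, hc2]
    abel
  -- key inequality ⟨p,q⟩ ≥ 0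
  have hss : Real.sqrt μ * Real.sqrt μ = μ := Real.mul_self_sqrt hμ.le
  have key : 0 ≤ ∑ i, p i * q i := by
    have h1 : (Real.sqrt μ • p) ⬝ᵥ (Real.sqrt μ • q) = μ * (p ⬝ᵥ q) := by
      rw [smul_dotProduct, dotProduct_smul, smul_eq_mul, smul_eq_mul, ← mul_assoc, hss]
    have h2 : (Real.sqrt μ • p) ⬝ᵥ (Real.sqrt μ • q) = W.mulVec y ⬝ᵥ y := by
      rw [e2, Matrix.dotProduct_mulVec, ← Matrix.mulVec_transpose, Matrix.mulVec_smul, e1]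
    have h3 : 0 ≤ W.mulVec y ⬝ᵥ y := by
      have := hW.dotProduct_mulVec_nonneg y; simpa [dotProduct_comm] using this
    have h4 : 0 ≤ μ * (p ⬝ᵥ q) := by rw [← h1, h2]; exact h3
    exact nonneg_of_mul_nonneg_right h4 hμ
  -- derivative
  have hD : HasDerivAt (fun t : ℝ => diverg vhat (v + t • d))
      ((∑ i, Real.exp (vhat i) * (Real.exp (-v i) * (-(d i)))) +
       ∑ i, Real.exp (-vhat i) * (Real.exp (v i) * d i)) 0 := by
    have funeq : (fun t : ℝ => diverg vhat (v + t • d)) =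
        fun t : ℝ => ((∑ i, Real.exp (vhat i) * Real.exp (-(v i + t * d i))) +
          ∑ i, Real.exp (-vhat i) * Real.exp (v i + t * d i)) - 2 * m := by
      funext t
      simp [diverg, Pi.add_apply, Pi.smul_apply, smul_eq_mul]
    rw [funeq]
    have h1 : ∀ i : Fin m, HasDerivAt
        (fun t : ℝ => Real.exp (vhat i) * Real.exp (-(v i + t * d i)))
        (Real.exp (vhat i) * (Real.exp (-v i) * (-(d i)))) 0 := by
      intro i
      have h0 : HasDerivAt (fun t : ℝ => -(v i + t * d i)) (-(d i)) 0 := by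
        simpa using (((hasDerivAt_id (0:ℝ)).mul_const (d i)).const_add (v i)).fun_neg
      simpa [mul_comm] using (h0.exp.const_mul (Real.exp (vhat i)))
    have h2 : ∀ i : Fin m, HasDerivAt
        (fun t : ℝ => Real.exp (-vhat i) * Real.exp (v i + t * d i))
        (Real.exp (-vhat i) * (Real.exp (v i) * d i)) 0 := by
      intro i
      have h0 : HasDerivAt (fun t : ℝ => v i + t * d i) (d i) 0 := by
        simpa using ((hasDerivAt_id (0:ℝ)).mul_const (d i)).const_add (v i)
      simpa [mul_comm] using (h0.exp.const_mul (Real.exp (-vhat i)))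
    exact ((HasDerivAt.fun_sum (fun i _ => h1 i)).add (HasDerivAt.fun_sum (fun i _ => h2 i))).sub_const _
  rw [hD.deriv]
  -- algebraic identity for the sum ∑ p q
  have hpq : ∑ i, p i * q i =
      (∑ _i : Fin m, (2:ℝ)) - (∑ i, Real.exp (vhat i) * Real.exp (-v i))
        - (∑ i, Real.exp (-vhat i) * Real.exp (v i)) - (∑ i, d i ^ 2)
        - ((∑ i, Real.exp (vhat i) * (Real.exp (-v i) * (-(d i)))) +
           ∑ i, Real.exp (-vhat i) * (Real.exp (v i) * d i)) := by
    simp only [← Finset.sum_add_distrib, ← Finset.sum_sub_distrib]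
    refine Finset.sum_congr rfl fun i _ => ?_
    have h12 : Real.exp (v i) * Real.exp (-v i) = 1 := by
      rw [← Real.exp_add]; simp
    have h34 : Real.exp (vhat i) * Real.exp (-vhat i) = 1 := by
      rw [← Real.exp_add]; simp
    simp only [hp, hq, Pi.add_apply, Pi.sub_apply, Pi.mul_apply, Pi.neg_apply, expV]
    linear_combination (1 - d i ^ 2) * h12 + h34
  have hconst : (∑ _i : Fin m, (2:ℝ)) = 2 * m := by
    simp [Finset.sum_const, Finset.card_univ, mul_comm]
  rw [hconst] at hpq
  simp only [diverg]
  linarith [key, hpq]
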